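/- arXiv:1304.6489 — 3 statements merged into one kernel-verified Lean document; each statement's English description precedes it below -/
import Mathlib

section
/- For every real N > 0, the equation M²·(1 − (M/(2N))·ln(1 + 2N/M)) = 1 has exactly one solution M in the interval [1, ∞). -/
noncomputable def gfun (x : ℝ) : ℝ := x * (3 + 2 * x) / (3 * (1 + x)) - Real.log (1 + x)

lemma gfun_hasDeriv (x : ℝ) (hx : -1 < x) :
    HasDerivAt gfun (x * (1 + 2 * x) / (3 * (1 + x) ^ 2)) x := by
  have h1 : (0:ℝ) < 1 + x := by linarith
  have h1' : (1:ℝ) + x ≠ 0 := ne_of_gt h1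
  have hd : (3:ℝ) * (1 + x) ≠ 0 := by positivity
  have hlog : HasDerivAt (fun y : ℝ => Real.log (1 + y)) (1 / (1 + x)) x := by
    have := (Real.hasDerivAt_log h1').comp x ((hasDerivAt_id x).const_add 1)
    simpa [Function.comp_def] using this
  have hnum : HasDerivAt (fun y : ℝ => y * (3 + 2 * y)) (1 * (3 + 2 * x) + x * (2 * 1)) x :=
    (hasDerivAt_id x).mul (((hasDerivAt_id x).const_mul 2).const_add 3)
  have hden : HasDerivAt (fun y : ℝ => 3 * (1 + y)) (3 * 1) x :=
    ((hasDerivAt_id x).const_add 1).const_mul 3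
  have hrat := hnum.div hden hd
  have := hrat.sub hlog
  refine this.congr_deriv ?_
  field_simp
  ring

lemma log_lt (x : ℝ) (hx : 0 < x) :
    Real.log (1 + x) < x * (3 + 2 * x) / (3 * (1 + x)) := by
  have hmono : StrictMonoOn gfun (Set.Ici 0) := by
    apply strictMonoOn_of_deriv_pos (convex_Ici 0)
    · intro y hy
      exact (gfun_hasDeriv y (by simp at hy; linarith)).continuousAt.continuousWithinAt
    · intro y hy
      rw [interior_Ici] at hy
      have hy' : (0:ℝ) < y := hy
      rw [(gfun_hasDeriv y (by linarith)).deriv]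
      positivity
  have h0 : gfun 0 = 0 := by simp [gfun]
  have := hmono (Set.self_mem_Ici) (Set.mem_Ici.mpr hx.le) hx
  rw [h0] at this
  unfold gfun at this
  linarith

noncomputable def ffun (N M : ℝ) : ℝ := M ^ 2 * (1 - M / (2 * N) * Real.log (1 + 2 * N / M))

noncomputable def Dfun (N M : ℝ) : ℝ :=
  2 * M - 3 * M ^ 2 / (2 * N) * Real.log (1 + 2 * N / M) + M ^ 2 / (M + 2 * N)

lemma ffun_hasDeriv (N M : ℝ) (hN : 0 < N) (hM : 0 < M) :
    HasDerivAt (ffun N) (Dfun N M) M := by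
  have hM' : M ≠ 0 := ne_of_gt hM
  have h1 : (0:ℝ) < 1 + 2 * N / M := by positivity
  have h1' : (1:ℝ) + 2 * N / M ≠ 0 := ne_of_gt h1
  have hinner : HasDerivAt (fun y : ℝ => 1 + 2 * N / y) (2 * N * (-(M ^ 2)⁻¹)) M := by
    have := ((hasDerivAt_inv hM').const_mul (2 * N)).const_add 1
    simpa [div_eq_mul_inv] using this
  have hlog : HasDerivAt (fun y : ℝ => Real.log (1 + 2 * N / y))
      ((1 + 2 * N / M)⁻¹ * (2 * N * (-(M ^ 2)⁻¹))) M := by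
    have := (Real.hasDerivAt_log h1').comp M hinner
    simpa [Function.comp_def] using this
  have hmid : HasDerivAt (fun y : ℝ => y / (2 * N) * Real.log (1 + 2 * N / y))
      (1 / (2 * N) * Real.log (1 + 2 * N / M)
        + M / (2 * N) * ((1 + 2 * N / M)⁻¹ * (2 * N * (-(M ^ 2)⁻¹)))) M := by
    have := ((hasDerivAt_id M).div_const (2 * N)).mul hlog
    simpa [Pi.mul_def] using this
  have hfull := (hasDerivAt_pow 2 M).mul (hmid.const_sub 1)
  have hMN : M + 2 * N ≠ 0 := by positivity
  refine hfull.congr_deriv ?_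
  unfold Dfun
  field_simp
  ring

lemma log_bound (N M : ℝ) (hN : 0 < N) (hM : 0 < M) :
    Real.log (1 + 2 * N / M) < 2 * N * (3 * M + 4 * N) / (3 * M * (M + 2 * N)) := by
  have hx : 0 < 2 * N / M := by positivity
  have h := log_lt (2 * N / M) hx
  have heq : 2 * N / M * (3 + 2 * (2 * N / M)) / (3 * (1 + 2 * N / M))
      = 2 * N * (3 * M + 4 * N) / (3 * M * (M + 2 * N)) := by
    field_simp
    ring
  rwa [heq] at h

lemma Dfun_pos (N M : ℝ) (hN : 0 < N) (hM : 0 < M) : 0 < Dfun N M := by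
  have hL := log_bound N M hN hM
  have hc : (0:ℝ) < 3 * M ^ 2 / (2 * N) := by positivity
  have h2 := mul_lt_mul_of_pos_left hL hc
  have heq : 3 * M ^ 2 / (2 * N) * (2 * N * (3 * M + 4 * N) / (3 * M * (M + 2 * N)))
      = 2 * M + M ^ 2 / (M + 2 * N) := by
    have hMN : M + 2 * N ≠ 0 := by positivity
    field_simp
    ring
  rw [heq] at h2
  unfold Dfun
  linarith

lemma ffun_lb (N M : ℝ) (hN : 0 < N) (hM : 0 < M) :
    2 * N * M ^ 2 / (3 * (M + 2 * N)) < ffun N M := by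
  have hL := log_bound N M hN hM
  have hc : (0:ℝ) < M ^ 2 * (M / (2 * N)) := by positivity
  have h2 := mul_lt_mul_of_pos_left hL hc
  have heq : M ^ 2 * (M / (2 * N)) * (2 * N * (3 * M + 4 * N) / (3 * M * (M + 2 * N)))
      = M ^ 2 - 2 * N * M ^ 2 / (3 * (M + 2 * N)) := by
    have hMN : M + 2 * N ≠ 0 := by positivity
    field_simp
    ring
  rw [heq] at h2
  have : ffun N M = M ^ 2 - M ^ 2 * (M / (2 * N)) * Real.log (1 + 2 * N / M) := by
    unfold ffun; ring
  rw [this]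
  linarith

/-- For every real `N > 0`, the heuristic equation
`M²·(1 − (M/(2N))·ln(1 + 2N/M)) = 1` has exactly one solution `M ∈ [1, ∞)`. -/
theorem heuristic_equation_unique_solution (N : ℝ) (hN : 0 < N) :
    ∃! M : ℝ, M ∈ Set.Ici (1 : ℝ) ∧
      M ^ 2 * (1 - M / (2 * N) * Real.log (1 + 2 * N / M)) = 1 := by
  have hmono : StrictMonoOn (ffun N) (Set.Ici 1) := by
    apply strictMonoOn_of_deriv_pos (convex_Ici 1)
    · intro y hy
      have hy' : (0:ℝ) < y := lt_of_lt_of_le one_pos hy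
      exact (ffun_hasDeriv N y hN hy').continuousAt.continuousWithinAt
    · intro y hy
      rw [interior_Ici] at hy
      have hy' : (0:ℝ) < y := lt_trans one_pos hy
      rw [(ffun_hasDeriv N y hN hy').deriv]
      exact Dfun_pos N y hN hy'
  -- pick b large enough
  set b : ℝ := max 3 (3 / N) with hb
  have hb3 : (3:ℝ) ≤ b := le_max_left _ _
  have hbN : 3 / N ≤ b := le_max_right _ _
  have hb1 : (1:ℝ) ≤ b := by linarith
  have hb0 : (0:ℝ) < b := by linarith
  have hNb : 3 ≤ N * b := by
    rw [div_le_iff₀ hN] at hbN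
    linarith [hbN]
  have hfb : 1 ≤ ffun N b := by
    have hlb := ffun_lb N b hN hb0
    have hkey : 3 * (b + 2 * N) ≤ 2 * N * b ^ 2 := by
      nlinarith [mul_nonneg (sub_nonneg.2 hNb) (by linarith : (0:ℝ) ≤ b - 3), hNb, hb3]
    have hpos : (0:ℝ) < 3 * (b + 2 * N) := by positivity
    have : (1:ℝ) ≤ 2 * N * b ^ 2 / (3 * (b + 2 * N)) := by
      rw [le_div_iff₀ hpos]; linarith
    linarith
  have hf1 : ffun N 1 < 1 := by
    have hlog : 0 < Real.log (1 + 2 * N) := Real.log_pos (by linarith)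
    have : ffun N 1 = 1 - 1 / (2 * N) * Real.log (1 + 2 * N) := by
      simp [ffun]
    rw [this]
    have h2 : 0 < 1 / (2 * N) * Real.log (1 + 2 * N) := by positivity
    linarith
  have hcont : ContinuousOn (ffun N) (Set.Icc 1 b) := by
    intro y hy
    have hy' : (0:ℝ) < y := lt_of_lt_of_le one_pos hy.1
    exact (ffun_hasDeriv N y hN hy').continuousAt.continuousWithinAt
  have hivt := intermediate_value_Icc hb1 hcont
  have h1mem : (1:ℝ) ∈ Set.Icc (ffun N 1) (ffun N b) := ⟨hf1.le, hfb⟩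
  obtain ⟨M, hMmem, hfM⟩ := hivt h1mem
  refine ⟨M, ⟨hMmem.1, hfM⟩, ?_⟩
  rintro y ⟨hy1, hy2⟩
  exact hmono.injOn hy1 hMmem.1 (by rw [show ffun N y = _ from rfl]; exact hy2.trans hfM.symm)
end

section
/- Let M̂(N) denote, for each real N > 0, the unique solution in [1, ∞) of M²·(1 − (M/(2N))·ln(1 + 2N/M)) = 1. Then N·M̂(N) → 1 as N → 0⁺, i.e. M̂(N) behaves like 1/N in the hard-core limit. -/
open Filter

lemma h_aux_lim : Tendsto (fun y : ℝ => (y - Real.log (1 + y)) / y ^ 2)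
    (nhdsWithin 0 (Set.Ioi 0)) (nhds (1/2)) := by
  rw [← tendsto_sub_nhds_zero_iff]
  apply squeeze_zero_norm' (a := fun y : ℝ => y / (1 - y))
  · filter_upwards [Ioo_mem_nhdsGT_of_mem
      (by norm_num : (0:ℝ) ∈ Set.Ico 0 1)] with y hy
    obtain ⟨hy0, hy1⟩ := hy
    have hkey := Real.abs_log_sub_add_sum_range_le
      (x := -y) (by rw [abs_neg, abs_of_pos hy0]; exact hy1) 2
    simp only [Finset.sum_range_succ, Finset.sum_range_zero] at hkey
    have h1 : (1 : ℝ) - -y = 1 + y := by ring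
    rw [h1, abs_neg, abs_of_pos hy0] at hkey
    have hkey' : |(-y + y^2/2 + Real.log (1 + y))| ≤ y ^ (2+1) / (1 - y) := by
      convert hkey using 3
      push_cast
      ring
    replace hkey := hkey'
    have hy2 : (0:ℝ) < y ^ 2 := by positivity
    have : (y - Real.log (1 + y)) / y ^ 2 - 1 / 2
        = -((-y + y^2/2 + Real.log (1 + y)) / y ^ 2) := by
      field_simp; ring
    have hyne : y ≠ 0 := ne_of_gt hy0
    have hy1' : (1:ℝ) - y ≠ 0 := by linarith
    rw [Real.norm_eq_abs, this, abs_neg, abs_div, abs_of_pos hy2]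
    rw [show y / (1 - y) = (y ^ (2+1) / (1 - y)) / y ^ 2 by field_simp]
    exact div_le_div_of_nonneg_right hkey hy2.le |>.trans_eq rfl
  · have h1 : Tendsto (fun y : ℝ => y / (1 - y)) (nhds 0) (nhds (0 / (1 - 0))) :=
      Tendsto.div tendsto_id (tendsto_const_nhds.sub tendsto_id) (by norm_num)
    simpa using h1.mono_left nhdsWithin_le_nhds

/-- If `Mhat N` is, for each `N > 0`, the unique solution in `[1, ∞)` of
`M²·(1 − (M/(2N))·ln(1 + 2N/M)) = 1`, then `N·Mhat N → 1` as `N → 0⁺`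
(hard-core limit: `Mhat N ~ 1/N`). -/
theorem heuristic_hardcore_limit (Mhat : ℝ → ℝ)
    (hMhat : ∀ N : ℝ, 0 < N → Mhat N ∈ Set.Ici (1 : ℝ) ∧
      (Mhat N) ^ 2 * (1 - Mhat N / (2 * N) * Real.log (1 + 2 * N / Mhat N)) = 1) :
    Tendsto (fun N => N * Mhat N) (nhdsWithin 0 (Set.Ioi 0)) (nhds 1) := by
  have hx : Tendsto (fun N : ℝ => 2 * N / Mhat N) (nhdsWithin 0 (Set.Ioi 0))
      (nhdsWithin 0 (Set.Ioi 0)) := by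
    apply tendsto_nhdsWithin_of_tendsto_nhds_of_eventually_within
    · have hup : Tendsto (fun N : ℝ => 2 * N) (nhdsWithin 0 (Set.Ioi 0)) (nhds 0) := by
        have : Tendsto (fun N : ℝ => 2 * N) (nhds 0) (nhds (2 * 0)) :=
          tendsto_const_nhds.mul tendsto_id
        simpa using this.mono_left nhdsWithin_le_nhds
      apply tendsto_of_tendsto_of_tendsto_of_le_of_le'
        (tendsto_const_nhds : Tendsto (fun _ : ℝ => (0:ℝ)) _ (nhds 0)) hup
      · filter_upwards [self_mem_nhdsWithin] with N hN
        have h1 : (1:ℝ) ≤ Mhat N := (hMhat N hN).1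
        have hM0 : (0:ℝ) < Mhat N := lt_of_lt_of_le one_pos h1
        have hN0 : (0:ℝ) < N := Set.mem_Ioi.mp hN
        positivity
      · filter_upwards [self_mem_nhdsWithin] with N hN
        have h1 : (1:ℝ) ≤ Mhat N := (hMhat N hN).1
        have hM0 : (0:ℝ) < Mhat N := lt_of_lt_of_le one_pos h1
        have hN0 : (0:ℝ) < N := Set.mem_Ioi.mp hN
        rw [div_le_iff₀ hM0]
        nlinarith
    · filter_upwards [self_mem_nhdsWithin] with N hN
      have h1 := (hMhat N hN).1
      have hM0 : (0:ℝ) < Mhat N := lt_of_lt_of_le one_pos h1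
      have : (0:ℝ) < 2 * N / Mhat N := by
        have := Set.mem_Ioi.mp hN; positivity
      exact this
  have hcomp := h_aux_lim.comp hx
  have hmain : Tendsto (fun N : ℝ =>
      1 / (2 * ((fun y : ℝ => (y - Real.log (1 + y)) / y ^ 2) (2 * N / Mhat N))))
      (nhdsWithin 0 (Set.Ioi 0)) (nhds 1) := by
    have h2 : Tendsto (fun N : ℝ =>
        2 * ((fun y : ℝ => (y - Real.log (1 + y)) / y ^ 2) (2 * N / Mhat N)))
        (nhdsWithin 0 (Set.Ioi 0)) (nhds (2 * (1/2))) :=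
      tendsto_const_nhds.mul hcomp
    have h3 := h2.inv₀ (by norm_num : (2:ℝ) * (1/2) ≠ 0)
    simpa [one_div] using h3
  refine hmain.congr' ?_ |>.mono_right le_rfl
  filter_upwards [self_mem_nhdsWithin] with N hN
  obtain ⟨hM1, heq⟩ := hMhat N hN
  have hN0 : (0:ℝ) < N := Set.mem_Ioi.mp hN
  have hM0 : (0:ℝ) < Mhat N := lt_of_lt_of_le one_pos hM1
  set M := Mhat N with hMdef
  set x := 2 * N / M with hxdef
  have hx0 : 0 < x := by positivity
  have hlog : Real.log (1 + x) < x := by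
    have := Real.log_lt_sub_one_of_pos (by linarith : (0:ℝ) < 1 + x)
      (by linarith : (1:ℝ) + x ≠ 1)
    linarith
  have hxM : x * M = 2 * N := by
    rw [hxdef]; field_simp
  have hfrac : M / (2 * N) = 1 / x := by
    rw [hxdef]; field_simp
  rw [hfrac] at heq
  -- heq : M ^ 2 * (1 - 1 / x * Real.log (1 + x)) = 1
  have hd : 0 < x - Real.log (1 + x) := by linarith
  show 1 / (2 * ((x - Real.log (1 + x)) / x ^ 2)) = N * M
  have hNM : N * M = x * M ^ 2 / 2 := by
    rw [hxdef]; field_simp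
  rw [hNM]
  have hkey : M ^ 2 * (x - Real.log (1 + x)) = x := by
    have h := heq
    field_simp at h
    linarith
  clear_value M
  clear heq hxM hfrac hNM hMdef hM1 hM0
  clear_value x
  field_simp
  linear_combination (-1) * hkey
end

section
/- For every integer K ≥ 2 there exist positive reals η₀, …, η_{K−1} satisfying η_k = (1/K)·Σ_{j=0}^{K−1} z(k,j)/η_j for every 0 ≤ k ≤ K−1, where z(k,j) := 1 − C(k,j)/C(K,j) and C(a,b) denotes the binomial coefficient with C(a,b) = 0 for b > a. -/
open Finset

section Key

variable {ι : Type*} [Fintype ι] [Nonempty ι]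

/-- The map of the fixed-point system. -/
noncomputable def Ffn (W : ι → ι → ℝ) (x : ι → ℝ) : ι → ℝ := fun i => ∑ j, W i j / x j

lemma Ffn_pos {W : ι → ι → ℝ} (hW : ∀ i j, 0 < W i j) {x : ι → ℝ}
    (hx : ∀ j, 0 < x j) (i : ι) : 0 < Ffn W x i :=
  Finset.sum_pos (fun j _ => div_pos (hW i j) (hx j)) univ_nonempty

lemma Ffn_anti {W : ι → ι → ℝ} (hW : ∀ i j, 0 < W i j) {x y : ι → ℝ}
    (hx : ∀ j, 0 < x j) (hxy : ∀ j, x j ≤ y j) (hne : x ≠ y) (i : ι) :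
    Ffn W y i < Ffn W x i := by
  obtain ⟨j0, hj0⟩ : ∃ j, x j ≠ y j := by
    by_contra h; push_neg at h; exact hne (funext h)
  refine Finset.sum_lt_sum (fun j _ => ?_) ⟨j0, mem_univ j0, ?_⟩
  · gcongr
    · exact (hW i j).le
    · exact hx j
    · exact hxy j
  · have h1 : x j0 < y j0 := lt_of_le_of_ne (hxy j0) hj0
    gcongr
    · exact hW i j0
    · exact hx j0

lemma Ffn_smul {W : ι → ι → ℝ} (x : ι → ℝ) (hx : ∀ j, 0 < x j) {a : ℝ} (ha : 0 < a) (i : ι) :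
    Ffn W (fun j => a * x j) i = a⁻¹ * Ffn W x i := by
  unfold Ffn
  rw [Finset.mul_sum]
  refine Finset.sum_congr rfl fun j _ => ?_
  have h1 : a ≠ 0 := ha.ne'
  have h2 : x j ≠ 0 := (hx j).ne'
  field_simp

theorem exists_pos_fp (W : ι → ι → ℝ) (hW : ∀ i j, 0 < W i j) :
    ∃ x : ι → ℝ, (∀ i, 0 < x i) ∧ ∀ i, x i = ∑ j, W i j / x j := by
  have hne : (univ : Finset ι).Nonempty := univ_nonempty
  have hne2 : (univ : Finset (ι × ι)).Nonempty := univ_nonempty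
  set m := univ.inf' hne2 (fun p : ι × ι => W p.1 p.2) with hm
  set M := univ.sup' hne2 (fun p : ι × ι => W p.1 p.2) with hM
  have hm_pos : 0 < m := (Finset.lt_inf'_iff hne2).mpr fun p _ => hW p.1 p.2
  have hmW : ∀ i j, m ≤ W i j := fun i j => Finset.inf'_le _ (mem_univ (i, j))
  have hWM : ∀ i j, W i j ≤ M := fun i j => Finset.le_sup' (fun p : ι × ι => W p.1 p.2) (mem_univ (i, j))
  have hmM : m ≤ M := by
    obtain ⟨i⟩ := (inferInstance : Nonempty ι)
    exact (hmW i i).trans (hWM i i)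
  have hM_pos : 0 < M := hm_pos.trans_le hmM
  set n : ℝ := (Fintype.card ι : ℝ) with hn
  have hn_pos : 0 < n := by
    rw [hn]; exact_mod_cast Fintype.card_pos
  set c := m / (n * M) with hc
  have hc_pos : 0 < c := div_pos hm_pos (mul_pos hn_pos hM_pos)
  -- ratio lemma
  have ratio : ∀ x : ι → ℝ, (∀ j, 0 < x j) → ∀ i i', Ffn W x i ≤ M / m * Ffn W x i' := by
    intro x hx i i'
    have h1 : Ffn W x i ≤ M * ∑ j, (x j)⁻¹ := by
      rw [Finset.mul_sum]
      refine Finset.sum_le_sum fun j _ => ?_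
      rw [div_eq_mul_inv]
      exact mul_le_mul_of_nonneg_right (hWM i j) (inv_pos.mpr (hx j)).le
    have h2 : m * ∑ j, (x j)⁻¹ ≤ Ffn W x i' := by
      rw [Finset.mul_sum]
      refine Finset.sum_le_sum fun j _ => ?_
      rw [div_eq_mul_inv]
      exact mul_le_mul_of_nonneg_right (hmW i' j) (inv_pos.mpr (hx j)).le
    calc Ffn W x i ≤ M * ∑ j, (x j)⁻¹ := h1
      _ = M / m * (m * ∑ j, (x j)⁻¹) := by field_simp
      _ ≤ M / m * Ffn W x i' := mul_le_mul_of_nonneg_left h2 (by positivity)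
  -- the compact domain
  set D : Set (ι → ℝ) := {x | (∀ i, c ≤ x i) ∧ ∑ i, x i = 1} with hD
  have hD_pos : ∀ x ∈ D, ∀ i, 0 < x i := fun x hx i => hc_pos.trans_le (hx.1 i)
  have hD_le_one : ∀ x ∈ D, ∀ i, x i ≤ 1 := by
    intro x hx i
    calc x i ≤ ∑ j, x j :=
          Finset.single_le_sum (fun j _ => (hD_pos x hx j).le) (mem_univ i)
      _ = 1 := hx.2
  have hF_lb : ∀ x ∈ D, ∀ j, m ≤ Ffn W x j := by
    intro x hx j
    obtain ⟨l0⟩ := (inferInstance : Nonempty ι)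
    have h1 : m ≤ W j l0 / x l0 := by
      refine (hmW j l0).trans (le_div_self (hW j l0).le (hD_pos x hx l0) (hD_le_one x hx l0))
    exact h1.trans (Finset.single_le_sum
      (fun l _ => (div_pos (hW j l) (hD_pos x hx l)).le) (mem_univ l0))
  set B : ℝ := n * (M / m) with hB
  have hG_ub : ∀ x ∈ D, ∀ i, Ffn W (Ffn W x) i ≤ B := by
    intro x hx i
    have h1 : ∀ j, W i j / Ffn W x j ≤ M / m := fun j =>
      div_le_div₀ hM_pos.le (hWM i j) hm_pos (hF_lb x hx j)
    calc Ffn W (Ffn W x) i ≤ ∑ _j : ι, M / m :=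
          Finset.sum_le_sum fun j _ => h1 j
      _ = B := by rw [Finset.sum_const, card_univ, nsmul_eq_mul, hB, hn]
  -- continuous surrogates
  set Fc : (ι → ℝ) → ι → ℝ := fun x i => ∑ j, W i j / max (x j) c with hFc
  set Gc : (ι → ℝ) → ι → ℝ := fun x i => ∑ j, W i j / max (Fc x j) m with hGc
  have hFc_eq : ∀ x ∈ D, ∀ i, Fc x i = Ffn W x i := by
    intro x hx i
    refine Finset.sum_congr rfl fun j _ => ?_
    rw [max_eq_left (hx.1 j)]
  have hGc_eq : ∀ x ∈ D, ∀ i, Gc x i = Ffn W (Ffn W x) i := by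
    intro x hx i
    refine Finset.sum_congr rfl fun j _ => ?_
    rw [hFc_eq x hx j, max_eq_left (hF_lb x hx j)]
  have hGc_cont : ∀ i, Continuous fun x => Gc x i := by
    have hFc_cont : ∀ j, Continuous fun x : ι → ℝ => Fc x j := by
      intro j
      apply continuous_finset_sum
      intro l _
      refine continuous_const.div ((continuous_apply l).max continuous_const) ?_
      exact fun x => (hc_pos.trans_le (le_max_right _ _)).ne'
    intro i
    apply continuous_finset_sum
    intro j _
    refine continuous_const.div ((hFc_cont j).max continuous_const) ?_
    exact fun x => (hm_pos.trans_le (le_max_right _ _)).ne'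
  -- the compact set of subsolutions
  set S : Set (ℝ × (ι → ℝ)) := {p | p.2 ∈ D ∧ 0 ≤ p.1 ∧ ∀ i, p.1 * p.2 i ≤ Gc p.2 i} with hS
  have hD_closed : IsClosed D := by
    have h1 : IsClosed {x : ι → ℝ | ∀ i, c ≤ x i} := by
      have he : {x : ι → ℝ | ∀ i, c ≤ x i} = ⋂ i, {x | c ≤ x i} := by
        ext x; simp [Set.mem_iInter]
      rw [he]
      exact isClosed_iInter fun i => isClosed_le continuous_const (continuous_apply i)
    have h2 : IsClosed {x : ι → ℝ | ∑ i, x i = 1} :=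
      isClosed_eq (continuous_finset_sum _ fun i _ => continuous_apply i) continuous_const
    exact h1.inter h2
  have hS_closed : IsClosed S := by
    have h1 : IsClosed {p : ℝ × (ι → ℝ) | p.2 ∈ D} := hD_closed.preimage continuous_snd
    have h2 : IsClosed {p : ℝ × (ι → ℝ) | 0 ≤ p.1} := isClosed_le continuous_const continuous_fst
    have h3 : IsClosed {p : ℝ × (ι → ℝ) | ∀ i, p.1 * p.2 i ≤ Gc p.2 i} := by
      have he : {p : ℝ × (ι → ℝ) | ∀ i, p.1 * p.2 i ≤ Gc p.2 i}
          = ⋂ i, {p : ℝ × (ι → ℝ) | p.1 * p.2 i ≤ Gc p.2 i} := by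
        ext p; simp [Set.mem_iInter]
      rw [he]
      refine isClosed_iInter fun i => isClosed_le ?_ ?_
      · exact continuous_fst.mul ((continuous_apply i).comp continuous_snd)
      · exact (hGc_cont i).comp continuous_snd
    exact h1.inter (h2.inter h3)
  have hS_sub : S ⊆ Set.Icc 0 (n * B) ×ˢ Set.Icc (fun _ => c) (fun _ => 1) := by
    rintro ⟨t, x⟩ ⟨hxD, ht0, hineq⟩
    refine ⟨⟨ht0, ?_⟩, fun i => hxD.1 i, fun i => hD_le_one x hxD i⟩
    have h2 : ∀ i, Gc x i ≤ B := fun i => (hGc_eq x hxD i) ▸ hG_ub x hxD i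
    calc t = ∑ i, t * x i := by rw [← Finset.mul_sum, hxD.2, mul_one]
      _ ≤ ∑ i, Gc x i := Finset.sum_le_sum fun i _ => hineq i
      _ ≤ ∑ _i : ι, B := Finset.sum_le_sum fun i _ => h2 i
      _ = n * B := by rw [Finset.sum_const, card_univ, nsmul_eq_mul, hn]
  have hS_compact : IsCompact S :=
    IsCompact.of_isClosed_subset (isCompact_Icc.prod isCompact_Icc) hS_closed hS_sub
  -- nonemptiness of S
  set xb : ι → ℝ := fun _ => 1 / n with hxb
  have hxbD : xb ∈ D := by
    constructor
    · intro i
      rw [hxb, hc, div_le_div_iff₀ (by positivity) hn_pos]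
      nlinarith
    · rw [hxb]
      simp only
      rw [Finset.sum_const, card_univ, nsmul_eq_mul, ← hn]
      field_simp
  have hxb_pos : ∀ i, 0 < xb i := hD_pos xb hxbD
  have hGxb_pos : ∀ i, 0 < Gc xb i := fun i => by
    rw [hGc_eq xb hxbD i]
    exact Ffn_pos hW (fun j => Ffn_pos hW hxb_pos j) i
  set t0 := univ.inf' hne (fun i => Gc xb i) * n with ht0def
  have hinf_pos : 0 < univ.inf' hne (fun i => Gc xb i) :=
    (Finset.lt_inf'_iff hne).mpr fun i _ => hGxb_pos i
  have ht0_pos : 0 < t0 := mul_pos hinf_pos hn_pos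
  have hS_ne_mem : (t0, xb) ∈ S := by
    refine ⟨hxbD, ht0_pos.le, fun i => ?_⟩
    have h1 : t0 * xb i = univ.inf' hne (fun i => Gc xb i) := by
      rw [ht0def, hxb]
      field_simp
    rw [h1]
    exact Finset.inf'_le _ (mem_univ i)
  obtain ⟨⟨lam, xs⟩, hmem, hmax⟩ :=
    hS_compact.exists_isMaxOn ⟨(t0, xb), hS_ne_mem⟩ continuous_fst.continuousOn
  obtain ⟨hxsD, hlam0, hineq⟩ := hmem
  have hlam_t0 : t0 ≤ lam := isMaxOn_iff.mp hmax (t0, xb) hS_ne_mem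
  have hlam_pos : 0 < lam := lt_of_lt_of_le ht0_pos hlam_t0
  have hxs_pos : ∀ i, 0 < xs i := hD_pos xs hxsD
  have hineq' : ∀ i, lam * xs i ≤ Ffn W (Ffn W xs) i := fun i => (hGc_eq xs hxsD i) ▸ hineq i
  -- the maximizer is an eigenvector of F∘F
  have heig : ∀ i, Ffn W (Ffn W xs) i = lam * xs i := by
    by_contra hcon
    push_neg at hcon
    obtain ⟨i0, hi0⟩ := hcon
    set y := Ffn W (Ffn W xs) with hy
    have hy_pos : ∀ i, 0 < y i := fun i => Ffn_pos hW (fun j => Ffn_pos hW hxs_pos j) i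
    have hne_fun : (fun i => lam * xs i) ≠ y := by
      intro h
      exact hi0 ((congrFun h i0).symm)
    have hlxs_pos : ∀ i, 0 < lam * xs i := fun i => mul_pos hlam_pos (hxs_pos i)
    have step1 : ∀ i, Ffn W y i < Ffn W (fun i => lam * xs i) i :=
      Ffn_anti hW hlxs_pos (fun i => hineq' i) hne_fun
    obtain ⟨iw⟩ := (inferInstance : Nonempty ι)
    have step2 : ∀ i, Ffn W (Ffn W (fun i => lam * xs i)) i < Ffn W (Ffn W y) i :=
      Ffn_anti hW (fun i => Ffn_pos hW hy_pos i) (fun i => (step1 i).le)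
        (fun h => (step1 iw).ne (congrFun h iw))
    have hhom : ∀ i, Ffn W (Ffn W (fun i => lam * xs i)) i = lam * y i := by
      intro i
      have h2 : Ffn W (fun i => lam * xs i) = fun j => lam⁻¹ * Ffn W xs j :=
        funext fun j => Ffn_smul xs hxs_pos hlam_pos j
      rw [h2, Ffn_smul (Ffn W xs) (fun j => Ffn_pos hW hxs_pos j) (inv_pos.mpr hlam_pos) i,
        inv_inv, hy]
    have key_strict : ∀ i, lam * y i < Ffn W (Ffn W y) i := fun i => (hhom i) ▸ step2 i
    set s := ∑ i, y i with hs
    have hs_pos : 0 < s := Finset.sum_pos (fun i _ => hy_pos i) hne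
    set u := fun i => y i / s with hu
    have hu_pos : ∀ i, 0 < u i := fun i => div_pos (hy_pos i) hs_pos
    have huD : u ∈ D := by
      constructor
      · intro i
        have h1 : ∀ i', y i' ≤ M / m * y i := fun i' =>
          ratio (Ffn W xs) (fun j => Ffn_pos hW hxs_pos j) i' i
        have h2 : s ≤ n * (M / m * y i) := by
          calc s = ∑ i', y i' := hs
            _ ≤ ∑ _i' : ι, M / m * y i := Finset.sum_le_sum fun i' _ => h1 i'
            _ = n * (M / m * y i) := by rw [Finset.sum_const, card_univ, nsmul_eq_mul, hn]
        have h3 : y i / (n * (M / m * y i)) ≤ y i / s := by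
          gcongr
          exact (hy_pos i).le
        have h4 : y i / (n * (M / m * y i)) = c := by
          rw [hc]
          have : y i ≠ 0 := (hy_pos i).ne'
          field_simp
        exact h4 ▸ h3
      · show (∑ i, y i / s) = 1
        rw [← Finset.sum_div, ← hs, div_self hs_pos.ne']
    have hGu_strict : ∀ i, lam < Gc u i / u i := by
      intro i
      have h1 : Ffn W u i = s * Ffn W y i := by
        have hueq : u = fun j => s⁻¹ * y j := by
          funext j; rw [hu]; exact div_eq_inv_mul _ _
        rw [hueq, Ffn_smul y hy_pos (inv_pos.mpr hs_pos) i, inv_inv]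
      have h2 : Ffn W (Ffn W u) i = s⁻¹ * Ffn W (Ffn W y) i := by
        have h3 : Ffn W u = fun j => s * Ffn W y j := funext fun j => by
          have hueq : u = fun j => s⁻¹ * y j := by
            funext l; rw [hu]; exact div_eq_inv_mul _ _
          rw [hueq, Ffn_smul y hy_pos (inv_pos.mpr hs_pos) j, inv_inv]
        rw [h3, Ffn_smul (Ffn W y) (fun j => Ffn_pos hW hy_pos j) hs_pos i]
      have h5 : lam * u i < Ffn W (Ffn W u) i := by
        rw [h2]
        have h6 := key_strict i
        have : lam * u i = s⁻¹ * (lam * y i) := by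
          rw [hu]; field_simp
        rw [this]
        exact mul_lt_mul_of_pos_left h6 (inv_pos.mpr hs_pos)
      rw [lt_div_iff₀ (hu_pos i)]
      rw [hGc_eq u huD i]
      linarith [h5]
    set lam' := univ.inf' hne (fun i => Gc u i / u i) with hlam'
    have h5 : lam < lam' := (Finset.lt_inf'_iff hne).mpr fun i _ => hGu_strict i
    have hmemS' : (lam', u) ∈ S := by
      refine ⟨huD, (hlam_pos.trans h5).le, fun i => ?_⟩
      have h6 : lam' ≤ Gc u i / u i := Finset.inf'_le _ (mem_univ i)
      calc lam' * u i ≤ Gc u i / u i * u i := mul_le_mul_of_nonneg_right h6 (hu_pos i).le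
        _ = Gc u i := div_mul_cancel₀ _ (hu_pos i).ne'
    have : lam' ≤ lam := isMaxOn_iff.mp hmax (lam', u) hmemS'
    linarith
  -- endgame: produce an actual fixed point
  set y := Ffn W xs with hy2
  have hy_pos : ∀ i, 0 < y i := fun i => Ffn_pos hW hxs_pos i
  have hGy : ∀ i, Ffn W (Ffn W y) i = lam⁻¹ * y i := by
    intro i
    have h1 : Ffn W (Ffn W xs) = fun i => lam * xs i := funext heig
    calc Ffn W (Ffn W y) i = Ffn W (fun i => lam * xs i) i := by rw [hy2, h1]
      _ = lam⁻¹ * Ffn W xs i := Ffn_smul xs hxs_pos hlam_pos i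
      _ = lam⁻¹ * y i := by rw [hy2]
  have finish : ∀ (v : ι → ℝ), (∀ i, 0 < v i) → ∀ (a : ℝ), 0 < a →
      (∀ i, Ffn W v i = a * v i) →
      ∃ x : ι → ℝ, (∀ i, 0 < x i) ∧ ∀ i, x i = ∑ j, W i j / x j := by
    intro v hv a ha hva
    have hsq : 0 < Real.sqrt a := Real.sqrt_pos.mpr ha
    refine ⟨fun i => Real.sqrt a * v i, fun i => mul_pos hsq (hv i), fun i => ?_⟩
    have h1 : Ffn W (fun i => Real.sqrt a * v i) i = (Real.sqrt a)⁻¹ * Ffn W v i :=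
      Ffn_smul v hv hsq i
    show Real.sqrt a * v i = Ffn W (fun i => Real.sqrt a * v i) i
    rw [h1, hva i]
    field_simp
    rw [Real.sq_sqrt ha.le, mul_comm]
  obtain ⟨i1, _, hi1⟩ := Finset.exists_mem_eq_inf' hne (fun i => xs i / y i)
  set t := univ.inf' hne (fun i => xs i / y i) with htdef
  have ht_pos : 0 < t := (Finset.lt_inf'_iff hne).mpr fun i _ => div_pos (hxs_pos i) (hy_pos i)
  have htle : ∀ i, t * y i ≤ xs i := by
    intro i
    have h1 : t ≤ xs i / y i := Finset.inf'_le _ (mem_univ i)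
    calc t * y i ≤ xs i / y i * y i := mul_le_mul_of_nonneg_right h1 (hy_pos i).le
      _ = xs i := div_mul_cancel₀ _ (hy_pos i).ne'
  have hti1 : xs i1 = t * y i1 := by
    rw [hi1]
    rw [div_mul_cancel₀ _ (hy_pos i1).ne']
  by_cases hcase : (fun i => t * y i) = xs
  · apply finish y hy_pos t ht_pos
    intro i
    have h1 : y i = Ffn W (fun j => t * y j) i := by
      conv_lhs => rw [hy2]
      rw [hcase]
    rw [Ffn_smul y hy_pos ht_pos i] at h1
    have h2 : t * y i = t * (t⁻¹ * Ffn W y i) := by rw [← h1]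
    rw [← mul_assoc, mul_inv_cancel₀ ht_pos.ne', one_mul] at h2
    exact h2.symm
  · obtain ⟨iw⟩ := (inferInstance : Nonempty ι)
    have step1 : ∀ i, Ffn W xs i < Ffn W (fun i => t * y i) i :=
      Ffn_anti hW (fun i => mul_pos ht_pos (hy_pos i)) htle hcase
    have step2 : ∀ i, Ffn W (Ffn W (fun i => t * y i)) i < Ffn W (Ffn W xs) i :=
      Ffn_anti hW (fun i => Ffn_pos hW hxs_pos i) (fun i => (step1 i).le)
        (fun h => (step1 iw).ne (congrFun h iw))
    have hcomp : ∀ i, Ffn W (Ffn W (fun i => t * y i)) i = t * (lam⁻¹ * y i) := by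
      intro i
      have h2 : Ffn W (fun j => t * y j) = fun j => t⁻¹ * Ffn W y j :=
        funext fun j => Ffn_smul y hy_pos ht_pos j
      rw [h2, Ffn_smul (Ffn W y) (fun j => Ffn_pos hW hy_pos j) (inv_pos.mpr ht_pos) i,
        inv_inv, hGy i]
    have hL : t * (lam⁻¹ * y i1) < lam * xs i1 := by
      have h3 := step2 i1
      rw [hcomp i1, heig i1] at h3
      exact h3
    have hlam_gt : lam⁻¹ < lam := by
      rw [hti1] at hL
      have hpos : 0 < t * y i1 := mul_pos ht_pos (hy_pos i1)
      nlinarith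
    obtain ⟨i2, _, hi2⟩ := Finset.exists_mem_eq_inf' hne (fun i => y i / xs i)
    set s2 := univ.inf' hne (fun i => y i / xs i) with hs2def
    have hs2_pos : 0 < s2 :=
      (Finset.lt_inf'_iff hne).mpr fun i _ => div_pos (hy_pos i) (hxs_pos i)
    have hs2le : ∀ i, s2 * xs i ≤ y i := by
      intro i
      have h1 : s2 ≤ y i / xs i := Finset.inf'_le _ (mem_univ i)
      calc s2 * xs i ≤ y i / xs i * xs i := mul_le_mul_of_nonneg_right h1 (hxs_pos i).le
        _ = y i := div_mul_cancel₀ _ (hxs_pos i).ne'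
    have hi2' : y i2 = s2 * xs i2 := by
      rw [hi2]
      rw [div_mul_cancel₀ _ (hxs_pos i2).ne']
    by_cases hcase2 : (fun i => s2 * xs i) = y
    · apply finish xs hxs_pos s2 hs2_pos
      intro i
      have h1 : Ffn W xs i = y i := by rw [hy2]
      rw [h1, ← hcase2]
    · have sstep1 : ∀ i, Ffn W y i < Ffn W (fun i => s2 * xs i) i :=
        Ffn_anti hW (fun i => mul_pos hs2_pos (hxs_pos i)) hs2le hcase2
      have sstep2 : ∀ i, Ffn W (Ffn W (fun i => s2 * xs i)) i < Ffn W (Ffn W y) i :=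
        Ffn_anti hW (fun i => Ffn_pos hW hy_pos i) (fun i => (sstep1 i).le)
          (fun h => (sstep1 iw).ne (congrFun h iw))
      have scomp : ∀ i, Ffn W (Ffn W (fun i => s2 * xs i)) i = s2 * (lam * xs i) := by
        intro i
        have h2 : Ffn W (fun j => s2 * xs j) = fun j => s2⁻¹ * Ffn W xs j :=
          funext fun j => Ffn_smul xs hxs_pos hs2_pos j
        rw [h2, Ffn_smul (Ffn W xs) (fun j => Ffn_pos hW hxs_pos j) (inv_pos.mpr hs2_pos) i,
          inv_inv, heig i]
      have hL2 : s2 * (lam * xs i2) < lam⁻¹ * y i2 := by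
        have h3 := sstep2 i2
        rw [scomp i2, hGy i2] at h3
        exact h3
      rw [hi2'] at hL2
      have hpos2 : 0 < s2 * xs i2 := mul_pos hs2_pos (hxs_pos i2)
      nlinarith

end Key

/-- Existence of a positive solution of the many-to-one chunk fixed-point system: for
every integer `K ≥ 2` there exist positive reals `η₀, …, η_{K−1}` with
`η k = (1/K)·Σ_j z(k,j)/η j`, where `z(k,j) = 1 − C(k,j)/C(K,j)`. -/
theorem chunk_fixed_point_exists (K : ℕ) (hK : 2 ≤ K) :
    ∃ η : Fin K → ℝ, (∀ k, 0 < η k) ∧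
      ∀ k : Fin K, η k =
        (1 / K) * ∑ j : Fin K,
          (1 - ((k : ℕ).choose j : ℝ) / (K.choose j : ℝ)) / η j := by
  haveI : NeZero K := ⟨by omega⟩
  have hK0 : (0 : ℝ) < K := by exact_mod_cast (by omega : 0 < K)
  have choose_lt : ∀ k j : ℕ, k < K → j ≠ 0 → j ≤ K → Nat.choose k j < Nat.choose K j := by
    intro k j hk hj0 hjK
    rcases lt_or_ge k j with h | h
    · rw [Nat.choose_eq_zero_of_lt h]
      exact Nat.choose_pos hjK
    · obtain ⟨j', rfl⟩ := Nat.exists_eq_succ_of_ne_zero hj0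
      have h1 : k.choose (j' + 1) < (k + 1).choose (j' + 1) := by
        rw [Nat.choose_succ_succ]
        have h2 : 0 < k.choose j' := Nat.choose_pos (le_trans (Nat.le_succ j') h)
        simp only [Nat.succ_eq_add_one]
        omega
      exact lt_of_lt_of_le h1 (Nat.choose_le_choose _ hk)
  have hzpos : ∀ k j : ℕ, k < K → j ≠ 0 → j ≤ K →
      0 < 1 - (Nat.choose k j : ℝ) / (Nat.choose K j : ℝ) := by
    intro k j hk hj hjK
    have h1 : 0 < (Nat.choose K j : ℝ) := by exact_mod_cast Nat.choose_pos hjK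
    have h2 : (Nat.choose k j : ℝ) < (Nat.choose K j : ℝ) := by
      exact_mod_cast choose_lt k j hk hj hjK
    have h3 : (Nat.choose k j : ℝ) / (Nat.choose K j : ℝ) < 1 := (div_lt_one h1).mpr h2
    linarith
  have hvalne : ∀ j : Fin K, j ≠ 0 → (j : ℕ) ≠ 0 := by
    intro j hj h
    apply hj
    apply Fin.ext
    simpa using h
  haveI : Nonempty {j : Fin K // j ≠ 0} := by
    refine ⟨⟨⟨1, by omega⟩, ?_⟩⟩
    intro h
    have := congrArg Fin.val h
    simp at this
  set W : {j : Fin K // j ≠ 0} → {j : Fin K // j ≠ 0} → ℝ :=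
    fun i j => (1 - (Nat.choose (i.1 : ℕ) (j.1 : ℕ) : ℝ) / (Nat.choose K (j.1 : ℕ) : ℝ)) / K
    with hWdef
  have hWpos : ∀ i j, 0 < W i j := by
    intro i j
    apply div_pos _ hK0
    exact hzpos _ _ i.1.isLt (hvalne j.1 j.2) (le_of_lt j.1.isLt)
  obtain ⟨x, hx_pos, hx_eq⟩ := exists_pos_fp W hWpos
  set η : Fin K → ℝ := fun k => if h : k = 0 then
      (1 / K) * ∑ j : {j : Fin K // j ≠ 0},
        (1 - (Nat.choose 0 (j.1 : ℕ) : ℝ) / (Nat.choose K (j.1 : ℕ) : ℝ)) / x j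
    else x ⟨k, h⟩ with hη
  have hsplit : ∀ f : Fin K → ℝ, ∑ j : Fin K, f j = f 0 + ∑ j : {j : Fin K // j ≠ 0}, f j.1 := by
    intro f
    rw [← Finset.sum_erase_add univ f (mem_univ 0), add_comm]
    congr 1
    exact Finset.sum_subtype _ (by simp) f
  have hη_ne : ∀ j : {j : Fin K // j ≠ 0}, η j.1 = x j := by
    intro j
    rw [hη]
    exact dif_neg j.2
  have hη0eq : η 0 = (1 / K) * ∑ j : {j : Fin K // j ≠ 0},
      (1 - (Nat.choose 0 (j.1 : ℕ) : ℝ) / (Nat.choose K (j.1 : ℕ) : ℝ)) / x j := by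
    rw [hη]
    exact dif_pos rfl
  have hηkeq : ∀ (k : Fin K) (h : k ≠ 0), η k = x ⟨k, h⟩ := by
    intro k h
    rw [hη]
    exact dif_neg h
  have hη0_pos : 0 < η 0 := by
    rw [hη0eq]
    apply mul_pos (by positivity)
    apply Finset.sum_pos _ univ_nonempty
    intro j _
    exact div_pos (hzpos 0 _ (by omega) (hvalne j.1 j.2) (le_of_lt j.1.isLt)) (hx_pos j)
  have hη_pos : ∀ k, 0 < η k := by
    intro k
    by_cases h : k = 0
    · rw [h]; exact hη0_pos
    · rw [hηkeq k h]; exact hx_pos _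
  refine ⟨η, hη_pos, ?_⟩
  intro k
  have hsum : (∑ j : Fin K, (1 - ((k : ℕ).choose j : ℝ) / (K.choose j : ℝ)) / η j)
      = ∑ j : {j : Fin K // j ≠ 0},
          (1 - ((k : ℕ).choose (j.1 : ℕ) : ℝ) / (K.choose (j.1 : ℕ) : ℝ)) / x j := by
    rw [hsplit (fun j => (1 - ((k : ℕ).choose j : ℝ) / (K.choose j : ℝ)) / η j)]
    have h0 : (1 - ((k : ℕ).choose ((0 : Fin K) : ℕ) : ℝ) / (K.choose ((0 : Fin K) : ℕ) : ℝ))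
        / η 0 = 0 := by
      simp
    rw [h0, zero_add]
    exact Finset.sum_congr rfl fun j _ => by rw [hη_ne j]
  rw [hsum]
  by_cases h : k = 0
  · subst h
    rw [hη0eq]
    congr 1
  · rw [hηkeq k h, hx_eq ⟨k, h⟩, Finset.mul_sum]
    refine Finset.sum_congr rfl fun j _ => ?_
    show ((1 - (Nat.choose (k : ℕ) (j.1 : ℕ) : ℝ) / (Nat.choose K (j.1 : ℕ) : ℝ)) / K) / x j
      = 1 / (K : ℝ) * ((1 - ((k : ℕ).choose (j.1 : ℕ) : ℝ) / (K.choose (j.1 : ℕ) : ℝ)) / x j)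
    ring
end
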